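/- Let R be a universal R-matrix for H, and let φ : H⊗H⊗H⊗H → H⊗H be the k-linear map determined by φ(c₁⊗c₂⊗c₃⊗c₄) = S(c₃)c₁ ⊗ S(c₄)c₂. Then for every c ∈ H⊗H⊗H⊗H, φ(R₁₂ᵀ·R₂₃·c) = φ(c), where R₁₂ᵀ denotes the image of τ(R) in tensor slots (1,2) of H⊗H⊗H⊗H and R₂₃ the image of R in slots (2,3). -/

import Mathlib

open TensorProduct

noncomputable section

variable (k H : Type*) [CommRing k] [Ring H] [HopfAlgebra k H]

/-- The k-linear swap `τ : H ⊗ H → H ⊗ H`, `x ⊗ y ↦ y ⊗ x`. -/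
def tau : H ⊗[k] H →ₗ[k] H ⊗[k] H := (TensorProduct.comm k H H).toLinearMap

/-- The opposite comultiplication `Δᵀ := τ ∘ Δ`. -/
def DeltaT : H →ₗ[k] H ⊗[k] H := tau k H ∘ₗ Coalgebra.comul

/-- Embedding of `H ⊗ H` into slots (1,2) of `H ⊗ (H ⊗ H)`: `x ⊗ y ↦ x ⊗ y ⊗ 1`. -/
def emb12 : H ⊗[k] H →ₐ[k] H ⊗[k] (H ⊗[k] H) :=
  Algebra.TensorProduct.map (AlgHom.id k H) Algebra.TensorProduct.includeLeft

/-- Embedding of `H ⊗ H` into slots (1,3) of `H ⊗ (H ⊗ H)`: `x ⊗ y ↦ x ⊗ 1 ⊗ y`. -/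
def emb13 : H ⊗[k] H →ₐ[k] H ⊗[k] (H ⊗[k] H) :=
  Algebra.TensorProduct.map (AlgHom.id k H) Algebra.TensorProduct.includeRight

/-- Embedding of `H ⊗ H` into slots (2,3) of `H ⊗ (H ⊗ H)`: `x ⊗ y ↦ 1 ⊗ x ⊗ y`. -/
def emb23 : H ⊗[k] H →ₐ[k] H ⊗[k] (H ⊗[k] H) :=
  Algebra.TensorProduct.includeRight

/-- The map `Δ ⊗ id : H ⊗ H → H ⊗ (H ⊗ H)`. -/
def DeltaId : H ⊗[k] H →ₗ[k] H ⊗[k] (H ⊗[k] H) :=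
  (TensorProduct.assoc k H H H).toLinearMap ∘ₗ
    TensorProduct.map Coalgebra.comul LinearMap.id

/-- The map `id ⊗ Δ : H ⊗ H → H ⊗ (H ⊗ H)`. -/
def IdDelta : H ⊗[k] H →ₗ[k] H ⊗[k] (H ⊗[k] H) :=
  TensorProduct.map LinearMap.id Coalgebra.comul

/-- `R` is a universal R-matrix: it is invertible, satisfies the two hexagon
relations `(Δ⊗id)R = R₁₃R₂₃`, `(id⊗Δ)R = R₁₃R₁₂`, and intertwines `Δ` with `Δᵀ`. -/
structure IsUniversalRMatrix (R : H ⊗[k] H) : Prop where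
  isUnit : IsUnit R
  hexagon1 : DeltaId k H R = emb13 k H R * emb23 k H R
  hexagon2 : IdDelta k H R = emb13 k H R * emb12 k H R
  intertwine : ∀ a : H, R * Coalgebra.comul a = DeltaT k H a * R

/-- The Drinfeld u-operator `u = m ((S ⊗ id) (τ R))`. -/
def uOp (R : H ⊗[k] H) : H :=
  LinearMap.mul' k H
    (TensorProduct.map (HopfAlgebra.antipode (R := k)) LinearMap.id (tau k H R))

/-- Embedding of `H ⊗ H` into slots (1,2) of `H⊗H⊗H⊗H`: `x ⊗ y ↦ x ⊗ y ⊗ 1 ⊗ 1`. -/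
def emb12' : H ⊗[k] H →ₐ[k] H ⊗[k] (H ⊗[k] (H ⊗[k] H)) :=
  Algebra.TensorProduct.map (AlgHom.id k H) Algebra.TensorProduct.includeLeft

/-- Embedding of `H ⊗ H` into slots (2,3) of `H⊗H⊗H⊗H`: `x ⊗ y ↦ 1 ⊗ x ⊗ y ⊗ 1`. -/
def emb23' : H ⊗[k] H →ₐ[k] H ⊗[k] (H ⊗[k] (H ⊗[k] H)) :=
  (Algebra.TensorProduct.includeRight :
      H ⊗[k] (H ⊗[k] H) →ₐ[k] H ⊗[k] (H ⊗[k] (H ⊗[k] H))).comp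
    (Algebra.TensorProduct.map (AlgHom.id k H) Algebra.TensorProduct.includeLeft)

/-- Embedding of `H ⊗ H` into slots (1,3) of `H⊗H⊗H⊗H`: `x ⊗ y ↦ x ⊗ 1 ⊗ y ⊗ 1`. -/
def emb13' : H ⊗[k] H →ₐ[k] H ⊗[k] (H ⊗[k] (H ⊗[k] H)) :=
  Algebra.TensorProduct.map (AlgHom.id k H)
    ((Algebra.TensorProduct.includeRight :
        H ⊗[k] H →ₐ[k] H ⊗[k] (H ⊗[k] H)).comp
      (Algebra.TensorProduct.includeLeft : H →ₐ[k] H ⊗[k] H))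


section AuxAntipode
open Coalgebra HopfAlgebra
variable {k H}

lemma sum_counit_smul_left {ι : Type*} {a : H} (r : Repr k a ι) :
    ∑ i ∈ r.index, counit (R := k) (r.right i) • r.left i = a := by
  have h := Coalgebra.sum_tmul_counit_eq (R := k) r
  apply_fun (TensorProduct.rid k H) at h
  simp only [map_sum, rid_tmul, one_smul] at h
  exact h

lemma sum_counit_smul_right {ι : Type*} {a : H} (r : Repr k a ι) :
    ∑ i ∈ r.index, counit (R := k) (r.left i) • r.right i = a := by
  have h := Coalgebra.sum_counit_tmul_eq (R := k) r
  apply_fun (TensorProduct.lid k H) at h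
  simp only [map_sum, lid_tmul, one_smul] at h
  exact h

lemma G1 {ι : Type*} (B C : H) {y : H} (r : Repr k y ι) :
    ∑ v ∈ r.index, B * r.left v * (antipode (R := k) (r.right v) * C) =
      counit (R := k) y • (B * C) := by
  have h : ∀ v, B * r.left v * (antipode (R := k) (r.right v) * C) =
      B * ((r.left v * antipode (R := k) (r.right v)) * C) := by
    intro v; rw [mul_assoc, mul_assoc]
  simp_rw [h, ← Finset.mul_sum, ← Finset.sum_mul, sum_mul_antipode_eq_algebraMap_counit r,
    ← Algebra.smul_def, mul_smul_comm]

lemma G1' {ι : Type*} (D B C : H) {y : H} (r : Repr k y ι) :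
    ∑ v ∈ r.index, D * (B * r.left v * (antipode (R := k) (r.right v) * C)) =
      counit (R := k) y • (D * (B * C)) := by
  rw [← Finset.mul_sum, G1, mul_smul_comm]

lemma G2 {ι : Type*} {x : H} (r : Repr k x ι) (D : H) :
    ∑ u ∈ r.index, D * (r.left u * antipode (R := k) (r.right u)) =
      counit (R := k) x • D := by
  rw [← Finset.mul_sum, sum_mul_antipode_eq_algebraMap_counit r, ← Algebra.commutes, ← Algebra.smul_def]


lemma prod_repr_sum {ι κ : Type*} (x y : H) (rx : Repr k x ι) (ry : Repr k y κ) :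
    ∑ i ∈ rx.index, ∑ j ∈ ry.index,
      antipode (R := k) (rx.left i * ry.left j) * (rx.right i * ry.right j) =
      algebraMap k H (counit (R := k) x * counit (R := k) y) := by
  have heq : ∑ p ∈ rx.index ×ˢ ry.index,
      (rx.left p.1 * ry.left p.2) ⊗ₜ[k] (rx.right p.1 * ry.right p.2) =
      CoalgebraStruct.comul (R := k) (x * y) := by
    rw [Bialgebra.comul_mul, ← rx.eq, ← ry.eq, Finset.sum_mul_sum, Finset.sum_product]
    simp [Algebra.TensorProduct.tmul_mul_tmul]
  have h := sum_antipode_mul_eq_algebraMap_counit (R := k)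
    (⟨rx.index ×ˢ ry.index, fun p => rx.left p.1 * ry.left p.2,
      fun p => rx.right p.1 * ry.right p.2, heq⟩ : Repr k (x * y) (ι × κ))
  rw [Finset.sum_product] at h
  simpa [Bialgebra.counit_mul] using h

lemma G3 {ι κ : Type*} {x y : H} (rx : Repr k x ι) (ry : Repr k y κ) (Z : H) :
    ∑ u ∈ rx.index, ∑ v ∈ ry.index,
      antipode (R := k) (rx.left u * ry.left v) * (rx.right u * ry.right v * Z) =
      (counit (R := k) x * counit (R := k) y) • Z := by
  have h : ∀ u v, antipode (R := k) (rx.left u * ry.left v) * (rx.right u * ry.right v * Z) =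
      (antipode (R := k) (rx.left u * ry.left v) * (rx.right u * ry.right v)) * Z := by
    intro u v; simp only [mul_assoc]
  simp_rw [h, ← Finset.sum_mul]
  rw [prod_repr_sum x y rx ry, ← Algebra.smul_def]


/-- three-fold multiplication -/
noncomputable def mul3 (k H : Type*) [CommRing k] [Ring H] [Algebra k H] :
    H ⊗[k] (H ⊗[k] H) →ₗ[k] H :=
  LinearMap.mul' k H ∘ₗ LinearMap.lTensor H (LinearMap.mul' k H)

@[simp] lemma mul3_tmul (x y z : H) : mul3 k H (x ⊗ₜ[k] (y ⊗ₜ[k] z)) = x * (y * z) := by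
  simp [mul3]

noncomputable def Mop (y₁ y₂ y₃ : H) : H ⊗[k] (H ⊗[k] H) →ₗ[k] H :=
  mul3 k H ∘ₗ TensorProduct.map (antipode (R := k) ∘ₗ LinearMap.mulRight k y₁)
    (TensorProduct.map (LinearMap.mulRight k y₂)
      (LinearMap.mulLeft k (antipode (R := k) y₃) ∘ₗ antipode (R := k)))

@[simp] lemma Mop_tmul (y₁ y₂ y₃ x₁ x₂ x₃ : H) :
    Mop y₁ y₂ y₃ (x₁ ⊗ₜ[k] (x₂ ⊗ₜ[k] x₃)) =
      antipode (R := k) (x₁ * y₁) *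
        (x₂ * y₂ * (antipode (R := k) y₃ * antipode (R := k) x₃)) := by
  simp [Mop, mul_assoc]

noncomputable def Nop (x₁ x₂ x₃ : H) : H ⊗[k] (H ⊗[k] H) →ₗ[k] H :=
  mul3 k H ∘ₗ TensorProduct.map (antipode (R := k) ∘ₗ LinearMap.mulLeft k x₁)
    (TensorProduct.map (LinearMap.mulLeft k x₂)
      (LinearMap.mulRight k (antipode (R := k) x₃) ∘ₗ antipode (R := k)))

@[simp] lemma Nop_tmul (x₁ x₂ x₃ y₁ y₂ y₃ : H) :
    Nop x₁ x₂ x₃ (y₁ ⊗ₜ[k] (y₂ ⊗ₜ[k] y₃)) =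
      antipode (R := k) (x₁ * y₁) *
        (x₂ * y₂ * (antipode (R := k) y₃ * antipode (R := k) x₃)) := by
  simp [Nop, mul_assoc]

lemma sum3_comm {V I U : Type*} {A : Type*} [AddCommMonoid A]
    (sV : Finset V) (sI : Finset I) (sU : I → Finset U) (f : V → I → U → A) :
    ∑ v ∈ sV, ∑ i ∈ sI, ∑ u ∈ sU i, f v i u =
    ∑ i ∈ sI, ∑ u ∈ sU i, ∑ v ∈ sV, f v i u := by
  rw [Finset.sum_comm]
  exact Finset.sum_congr rfl fun i _ => Finset.sum_comm

lemma sum4_comm {J V I U : Type*} {A : Type*} [AddCommMonoid A]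
    (sJ : Finset J) (sV : J → Finset V) (sI : Finset I) (sU : I → Finset U)
    (f : J → V → I → U → A) :
    ∑ j ∈ sJ, ∑ v ∈ sV j, ∑ i ∈ sI, ∑ u ∈ sU i, f j v i u =
    ∑ i ∈ sI, ∑ u ∈ sU i, ∑ j ∈ sJ, ∑ v ∈ sV j, f j v i u := by
  calc ∑ j ∈ sJ, ∑ v ∈ sV j, ∑ i ∈ sI, ∑ u ∈ sU i, f j v i u
      = ∑ j ∈ sJ, ∑ i ∈ sI, ∑ u ∈ sU i, ∑ v ∈ sV j, f j v i u :=
        Finset.sum_congr rfl fun j _ => sum3_comm _ _ _ _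
    _ = ∑ i ∈ sI, ∑ j ∈ sJ, ∑ u ∈ sU i, ∑ v ∈ sV j, f j v i u := Finset.sum_comm
    _ = ∑ i ∈ sI, ∑ u ∈ sU i, ∑ j ∈ sJ, ∑ v ∈ sV j, f j v i u :=
        Finset.sum_congr rfl fun i _ => Finset.sum_comm

theorem antipode_mul_anti (a b : H) :
    antipode (R := k) (a * b) = antipode (R := k) b * antipode (R := k) a := by
  classical
  let ra : Repr k a (H × H) := ℛ k a
  let rb : Repr k b (H × H) := ℛ k b
  let ra1 : ∀ i, Repr k (ra.left i) (H × H) := fun i => ℛ k _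
  let ra2 : ∀ i, Repr k (ra.right i) (H × H) := fun i => ℛ k _
  let rb1 : ∀ j, Repr k (rb.left j) (H × H) := fun j => ℛ k _
  let rb2 : ∀ j, Repr k (rb.right j) (H × H) := fun j => ℛ k _
  have E_a := sum_tmul_tmul_eq (R := k) ra ra1 ra2
  have E_b := sum_tmul_tmul_eq (R := k) rb rb1 rb2
  have h1 : ∑ j ∈ rb.index, ∑ v ∈ (rb2 j).index, ∑ i ∈ ra.index, ∑ u ∈ (ra2 i).index,
      antipode (R := k) (ra.left i * rb.left j) *
        ((ra2 i).left u * (rb2 j).left v *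
          (antipode (R := k) ((rb2 j).right v) * antipode (R := k) ((ra2 i).right u))) =
      antipode (R := k) (a * b) := by
    calc ∑ j ∈ rb.index, ∑ v ∈ (rb2 j).index, ∑ i ∈ ra.index, ∑ u ∈ (ra2 i).index,
        antipode (R := k) (ra.left i * rb.left j) *
          ((ra2 i).left u * (rb2 j).left v *
            (antipode (R := k) ((rb2 j).right v) * antipode (R := k) ((ra2 i).right u)))
        = ∑ j ∈ rb.index, ∑ i ∈ ra.index, ∑ u ∈ (ra2 i).index, ∑ v ∈ (rb2 j).index,
            antipode (R := k) (ra.left i * rb.left j) *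
              ((ra2 i).left u * (rb2 j).left v *
                (antipode (R := k) ((rb2 j).right v) * antipode (R := k) ((ra2 i).right u))) :=
          Finset.sum_congr rfl fun j _ => sum3_comm _ _ _ _
      _ = ∑ j ∈ rb.index, ∑ i ∈ ra.index, ∑ u ∈ (ra2 i).index,
            counit (R := k) (rb.right j) •
              (antipode (R := k) (ra.left i * rb.left j) *
                ((ra2 i).left u * antipode (R := k) ((ra2 i).right u))) := by
          refine Finset.sum_congr rfl fun j _ => Finset.sum_congr rfl fun i _ =>
            Finset.sum_congr rfl fun u _ => ?_
          exact G1' _ _ _ (rb2 j)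
      _ = ∑ j ∈ rb.index, ∑ i ∈ ra.index,
            counit (R := k) (rb.right j) • (counit (R := k) (ra.right i) •
              antipode (R := k) (ra.left i * rb.left j)) := by
          refine Finset.sum_congr rfl fun j _ => Finset.sum_congr rfl fun i _ => ?_
          rw [← Finset.smul_sum, G2 (ra2 i)]
      _ = ∑ j ∈ rb.index, counit (R := k) (rb.right j) •
            antipode (R := k) (a * rb.left j) := by
          refine Finset.sum_congr rfl fun j _ => ?_
          rw [← Finset.smul_sum]
          congr 1
          have hx : a * rb.left j = ∑ i ∈ ra.index,
              counit (R := k) (ra.right i) • (ra.left i * rb.left j) := by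
            conv_lhs => rw [← sum_counit_smul_left (k := k) ra]
            rw [Finset.sum_mul]
            exact Finset.sum_congr rfl fun i _ => smul_mul_assoc _ _ _
          rw [hx, map_sum]
          exact Finset.sum_congr rfl fun i _ => (map_smul _ _ _).symm
      _ = antipode (R := k) (a * b) := by
          have hx : a * b = ∑ j ∈ rb.index,
              counit (R := k) (rb.right j) • (a * rb.left j) := by
            conv_lhs => rw [← sum_counit_smul_left (k := k) rb]
            rw [Finset.mul_sum]
            exact Finset.sum_congr rfl fun j _ => mul_smul_comm _ _ _
          rw [hx, map_sum]
          exact Finset.sum_congr rfl fun j _ => (map_smul _ _ _).symm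
  have h5 : ∑ i ∈ ra.index, ∑ u ∈ (ra1 i).index, ∑ j ∈ rb.index, ∑ v ∈ (rb1 j).index,
      antipode (R := k) ((ra1 i).left u * (rb1 j).left v) *
        ((ra1 i).right u * (rb1 j).right v *
          (antipode (R := k) (rb.right j) * antipode (R := k) (ra.right i))) =
      antipode (R := k) b * antipode (R := k) a := by
    calc ∑ i ∈ ra.index, ∑ u ∈ (ra1 i).index, ∑ j ∈ rb.index, ∑ v ∈ (rb1 j).index,
        antipode (R := k) ((ra1 i).left u * (rb1 j).left v) *
          ((ra1 i).right u * (rb1 j).right v *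
            (antipode (R := k) (rb.right j) * antipode (R := k) (ra.right i)))
        = ∑ i ∈ ra.index, ∑ j ∈ rb.index, ∑ u ∈ (ra1 i).index, ∑ v ∈ (rb1 j).index,
            antipode (R := k) ((ra1 i).left u * (rb1 j).left v) *
              ((ra1 i).right u * (rb1 j).right v *
                (antipode (R := k) (rb.right j) * antipode (R := k) (ra.right i))) :=
          Finset.sum_congr rfl fun i _ => Finset.sum_comm
      _ = ∑ i ∈ ra.index, ∑ j ∈ rb.index,
            (counit (R := k) (ra.left i) * counit (R := k) (rb.left j)) •
              (antipode (R := k) (rb.right j) * antipode (R := k) (ra.right i)) := by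
          refine Finset.sum_congr rfl fun i _ => Finset.sum_congr rfl fun j _ => ?_
          exact G3 (ra1 i) (rb1 j) _
      _ = ∑ i ∈ ra.index, counit (R := k) (ra.left i) •
            (antipode (R := k) b * antipode (R := k) (ra.right i)) := by
          refine Finset.sum_congr rfl fun i _ => ?_
          simp_rw [mul_smul]
          rw [← Finset.smul_sum]
          congr 1
          calc ∑ j ∈ rb.index, counit (R := k) (rb.left j) •
              (antipode (R := k) (rb.right j) * antipode (R := k) (ra.right i))
              = (∑ j ∈ rb.index, counit (R := k) (rb.left j) •
                  antipode (R := k) (rb.right j)) * antipode (R := k) (ra.right i) := by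
                rw [Finset.sum_mul]
                exact Finset.sum_congr rfl fun j _ => (smul_mul_assoc _ _ _).symm
            _ = antipode (R := k) b * antipode (R := k) (ra.right i) := by
                congr 1
                conv_rhs => rw [← sum_counit_smul_right (k := k) rb]
                rw [map_sum]
                exact Finset.sum_congr rfl fun j _ => (map_smul _ _ _).symm
      _ = antipode (R := k) b * antipode (R := k) a := by
          have hcomm : ∀ i ∈ ra.index, counit (R := k) (ra.left i) •
              (antipode (R := k) b * antipode (R := k) (ra.right i)) =
              antipode (R := k) b * (counit (R := k) (ra.left i) •
                antipode (R := k) (ra.right i)) :=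
            fun i _ => (mul_smul_comm _ _ _).symm
          rw [Finset.sum_congr rfl hcomm, ← Finset.mul_sum]
          congr 1
          conv_rhs => rw [← sum_counit_smul_right (k := k) ra]
          rw [map_sum]
          exact Finset.sum_congr rfl fun i _ => (map_smul _ _ _).symm
  have hM : ∑ j ∈ rb.index, ∑ v ∈ (rb2 j).index, ∑ i ∈ ra.index, ∑ u ∈ (ra1 i).index,
      antipode (R := k) ((ra1 i).left u * rb.left j) *
        ((ra1 i).right u * (rb2 j).left v *
          (antipode (R := k) ((rb2 j).right v) * antipode (R := k) (ra.right i))) =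
      ∑ j ∈ rb.index, ∑ v ∈ (rb2 j).index, ∑ i ∈ ra.index, ∑ u ∈ (ra2 i).index,
      antipode (R := k) (ra.left i * rb.left j) *
        ((ra2 i).left u * (rb2 j).left v *
          (antipode (R := k) ((rb2 j).right v) * antipode (R := k) ((ra2 i).right u))) := by
    refine Finset.sum_congr rfl fun j _ => Finset.sum_congr rfl fun v _ => ?_
    have h := congrArg (Mop (rb.left j) ((rb2 j).left v) ((rb2 j).right v)) E_a
    simpa [map_sum] using h
  have hN : ∑ i ∈ ra.index, ∑ u ∈ (ra1 i).index, ∑ j ∈ rb.index, ∑ v ∈ (rb1 j).index,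
      antipode (R := k) ((ra1 i).left u * (rb1 j).left v) *
        ((ra1 i).right u * (rb1 j).right v *
          (antipode (R := k) (rb.right j) * antipode (R := k) (ra.right i))) =
      ∑ i ∈ ra.index, ∑ u ∈ (ra1 i).index, ∑ j ∈ rb.index, ∑ v ∈ (rb2 j).index,
      antipode (R := k) ((ra1 i).left u * rb.left j) *
        ((ra1 i).right u * (rb2 j).left v *
          (antipode (R := k) ((rb2 j).right v) * antipode (R := k) (ra.right i))) := by
    refine Finset.sum_congr rfl fun i _ => Finset.sum_congr rfl fun u _ => ?_
    have h := congrArg (Nop ((ra1 i).left u) ((ra1 i).right u) (ra.right i)) E_b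
    simpa [map_sum] using h
  calc antipode (R := k) (a * b)
      = ∑ j ∈ rb.index, ∑ v ∈ (rb2 j).index, ∑ i ∈ ra.index, ∑ u ∈ (ra2 i).index,
        antipode (R := k) (ra.left i * rb.left j) *
          ((ra2 i).left u * (rb2 j).left v *
            (antipode (R := k) ((rb2 j).right v) * antipode (R := k) ((ra2 i).right u))) :=
        h1.symm
    _ = ∑ j ∈ rb.index, ∑ v ∈ (rb2 j).index, ∑ i ∈ ra.index, ∑ u ∈ (ra1 i).index,
        antipode (R := k) ((ra1 i).left u * rb.left j) *
          ((ra1 i).right u * (rb2 j).left v *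
            (antipode (R := k) ((rb2 j).right v) * antipode (R := k) (ra.right i))) := hM.symm
    _ = ∑ i ∈ ra.index, ∑ u ∈ (ra1 i).index, ∑ j ∈ rb.index, ∑ v ∈ (rb2 j).index,
        antipode (R := k) ((ra1 i).left u * rb.left j) *
          ((ra1 i).right u * (rb2 j).left v *
            (antipode (R := k) ((rb2 j).right v) * antipode (R := k) (ra.right i))) :=
        sum4_comm _ _ _ _ _
    _ = ∑ i ∈ ra.index, ∑ u ∈ (ra1 i).index, ∑ j ∈ rb.index, ∑ v ∈ (rb1 j).index,
        antipode (R := k) ((ra1 i).left u * (rb1 j).left v) *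
          ((ra1 i).right u * (rb1 j).right v *
            (antipode (R := k) (rb.right j) * antipode (R := k) (ra.right i))) := hN.symm
    _ = antipode (R := k) b * antipode (R := k) a := h5

end AuxAntipode

/-- the algebra map `(id ⊗ unit∘counit) : H⊗H → H⊗H`. -/
def geps : H ⊗[k] H →ₐ[k] H ⊗[k] H :=
  Algebra.TensorProduct.map (AlgHom.id k H)
    ((Algebra.ofId k H).comp (Bialgebra.counitAlgHom k H))

/-- `χ : H⊗H →ₐ H`, `x ⊗ y ↦ ε(y) • x`. -/
def chi : H ⊗[k] H →ₐ[k] H :=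
  (Algebra.TensorProduct.rid k k H).toAlgHom.comp
    (Algebra.TensorProduct.map (AlgHom.id k H) (Bialgebra.counitAlgHom k H))

section AuxRmat
open Coalgebra HopfAlgebra
variable {k H}

@[simp] lemma chi_tmul (x y : H) : chi k H (x ⊗ₜ[k] y) = counit (R := k) y • x := by
  simp [chi, Algebra.TensorProduct.rid_tmul]

lemma chi_comul (b : H) : chi k H (Coalgebra.comul (R := k) b) = b := by
  let r : Repr k b (H × H) := ℛ k b
  rw [show Coalgebra.comul (R := k) b = CoalgebraStruct.comul (R := k) b from rfl, ← r.eq,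
    map_sum]
  simp only [chi_tmul]
  exact sum_counit_smul_left r

lemma xi_IdDelta (z : H ⊗[k] H) :
    Algebra.TensorProduct.map (AlgHom.id k H) (chi k H) (IdDelta k H z) = z := by
  induction z using TensorProduct.induction_on with
  | zero => simp
  | tmul a b =>
    simp [IdDelta, Algebra.TensorProduct.map_tmul, chi_comul]
  | add x y hx hy => simp [map_add, hx, hy]

lemma xi_emb13 (z : H ⊗[k] H) :
    Algebra.TensorProduct.map (AlgHom.id k H) (chi k H) (emb13 k H z) = geps k H z := by
  induction z using TensorProduct.induction_on with
  | zero => simp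
  | tmul x y =>
    simp [emb13, geps, Algebra.TensorProduct.map_tmul,
      Algebra.TensorProduct.includeRight_apply, Algebra.ofId_apply,
      Algebra.algebraMap_eq_smul_one]
  | add x y hx hy => simp [map_add, hx, hy]

lemma xi_emb12 (z : H ⊗[k] H) :
    Algebra.TensorProduct.map (AlgHom.id k H) (chi k H) (emb12 k H z) = z := by
  induction z using TensorProduct.induction_on with
  | zero => simp
  | tmul x y =>
    simp [emb12, Algebra.TensorProduct.map_tmul,
      Algebra.TensorProduct.includeLeft_apply]
  | add x y hx hy => simp [map_add, hx, hy]

lemma counit_R_eq {R : H ⊗[k] H} (hu : IsUnit R)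
    (hex : IdDelta k H R = emb13 k H R * emb12 k H R) : geps k H R = 1 := by
  have h := congrArg (Algebra.TensorProduct.map (AlgHom.id k H) (chi k H)) hex
  rw [xi_IdDelta, map_mul, xi_emb13, xi_emb12] at h
  exact hu.mul_right_cancel (by rw [← h, one_mul])


def Psi : H ⊗[k] (H ⊗[k] H) →ₗ[k] H ⊗[k] H :=
  (TensorProduct.comm k H H).toLinearMap ∘ₗ
    TensorProduct.map LinearMap.id
      (LinearMap.mul' k H ∘ₗ LinearMap.rTensor H (HopfAlgebra.antipode (R := k)))

@[simp] lemma Psi_tmul (x y z : H) :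
    Psi (x ⊗ₜ[k] (y ⊗ₜ[k] z)) = (HopfAlgebra.antipode (R := k) y * z) ⊗ₜ[k] x := by
  simp [Psi]

lemma Psi_IdDelta (z : H ⊗[k] H) :
    Psi (IdDelta k H z) = TensorProduct.comm k H H (geps k H z) := by
  induction z using TensorProduct.induction_on with
  | zero => simp [Psi, IdDelta, geps]
  | tmul a b =>
    simp [Psi, IdDelta, geps, Algebra.TensorProduct.map_tmul, Algebra.ofId_apply]
  | add x y hx hy => simp only [map_add, hx, hy]

lemma key2 {R : H ⊗[k] H} (hu : IsUnit R)
    (hex : IdDelta k H R = emb13 k H R * emb12 k H R) :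
    Psi (emb13 k H R * emb12 k H R) = (1 : H) ⊗ₜ[k] (1 : H) := by
  rw [← hex, Psi_IdDelta, counit_R_eq hu hex]
  simp [Algebra.TensorProduct.one_def]

end AuxRmat

set_option maxHeartbeats 2000000 in
/-- For the k-linear map `φ : H⊗H⊗H⊗H → H⊗H` determined by
`φ(c₁⊗c₂⊗c₃⊗c₄) = S(c₃)c₁ ⊗ S(c₄)c₂`, we have `φ(R₁₂ᵀ·R₂₃·c) = φ(c)` for all `c`. -/
theorem phi_RT12_R23 (R : H ⊗[k] H) (hR : IsUniversalRMatrix k H R)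
    (Sinv : H →ₗ[k] H)
    (hS1 : ∀ a : H, Sinv (HopfAlgebra.antipode (R := k) a) = a)
    (hS2 : ∀ a : H, HopfAlgebra.antipode (R := k) (Sinv a) = a)
    (φ : H ⊗[k] (H ⊗[k] (H ⊗[k] H)) →ₗ[k] H ⊗[k] H)
    (hφ : ∀ c₁ c₂ c₃ c₄ : H,
      φ (c₁ ⊗ₜ (c₂ ⊗ₜ (c₃ ⊗ₜ c₄))) =
        (HopfAlgebra.antipode (R := k) c₃ * c₁) ⊗ₜ[k]
          (HopfAlgebra.antipode (R := k) c₄ * c₂)) :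
    ∀ c : H ⊗[k] (H ⊗[k] (H ⊗[k] H)),
      φ (emb12' k H (tau k H R) * emb23' k H R * c) = φ c := by
  have claim1 : ∀ (c₁ c₂ c₃ c₄ : H) (x y : H ⊗[k] H),
      φ (emb12' k H (tau k H x) * emb23' k H y * (c₁ ⊗ₜ (c₂ ⊗ₜ (c₃ ⊗ₜ c₄)))) =
      TensorProduct.map
        (LinearMap.mulLeft k (HopfAlgebra.antipode (R := k) c₃) ∘ₗ LinearMap.mulRight k c₁)
        (LinearMap.mulLeft k (HopfAlgebra.antipode (R := k) c₄) ∘ₗ LinearMap.mulRight k c₂)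
        (Psi (emb13 k H x * emb12 k H y)) := by
    intro c₁ c₂ c₃ c₄ x y
    induction x using TensorProduct.induction_on with
    | zero =>
      show φ (LinearMap.mulRight k (c₁ ⊗ₜ (c₂ ⊗ₜ (c₃ ⊗ₜ c₄)))
          (LinearMap.mulRight k (emb23' k H y) (emb12' k H (tau k H (0 : H ⊗[k] H))))) =
        TensorProduct.map _ _
          (Psi (LinearMap.mulRight k (emb12 k H y) (emb13 k H (0 : H ⊗[k] H))))
      simp only [map_zero]
    | add u v hu hv =>
      show φ (LinearMap.mulRight k (c₁ ⊗ₜ (c₂ ⊗ₜ (c₃ ⊗ₜ c₄)))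
          (LinearMap.mulRight k (emb23' k H y) (emb12' k H (tau k H (u + v))))) =
        TensorProduct.map _ _
          (Psi (LinearMap.mulRight k (emb12 k H y) (emb13 k H (u + v))))
      simp only [map_add]
      exact congrArg₂ (· + ·) hu hv
    | tmul x₁ x₂ =>
      induction y using TensorProduct.induction_on with
      | zero =>
        show φ (LinearMap.mulRight k (c₁ ⊗ₜ (c₂ ⊗ₜ (c₃ ⊗ₜ c₄)))
            (LinearMap.mulLeft k (emb12' k H (tau k H (x₁ ⊗ₜ x₂)))
              (emb23' k H (0 : H ⊗[k] H)))) =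
          TensorProduct.map _ _
            (Psi (LinearMap.mulLeft k (emb13 k H (x₁ ⊗ₜ x₂)) (emb12 k H (0 : H ⊗[k] H))))
        simp only [map_zero]
      | add u v hu hv =>
        show φ (LinearMap.mulRight k (c₁ ⊗ₜ (c₂ ⊗ₜ (c₃ ⊗ₜ c₄)))
            (LinearMap.mulLeft k (emb12' k H (tau k H (x₁ ⊗ₜ x₂))) (emb23' k H (u + v)))) =
          TensorProduct.map _ _
            (Psi (LinearMap.mulLeft k (emb13 k H (x₁ ⊗ₜ x₂)) (emb12 k H (u + v))))
        simp only [map_add]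
        exact congrArg₂ (· + ·) hu hv
      | tmul y₁ y₂ =>
        simp only [tau, emb12', emb23', emb13, emb12, LinearEquiv.coe_coe, comm_tmul,
          Algebra.TensorProduct.map_tmul, Algebra.TensorProduct.includeLeft_apply,
          Algebra.TensorProduct.includeRight_apply, AlgHom.coe_comp, Function.comp_apply,
          AlgHom.coe_id, id_eq, Algebra.TensorProduct.tmul_mul_tmul,
          Algebra.TensorProduct.one_def, one_mul, mul_one, Psi_tmul, hφ,
          TensorProduct.map_tmul, LinearMap.coe_comp, LinearMap.mulLeft_apply,
          LinearMap.mulRight_apply]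
        rw [antipode_mul_anti]
        simp [mul_assoc]
  have main : ∀ c : H ⊗[k] (H ⊗[k] (H ⊗[k] H)),
      φ (LinearMap.mulLeft k (emb12' k H (tau k H R) * emb23' k H R) c) = φ c := by
    intro c
    induction c using TensorProduct.induction_on with
    | zero => simp only [map_zero]
    | add u v hu hv => simp only [map_add, hu, hv]
    | tmul c₁ d =>
      induction d using TensorProduct.induction_on with
      | zero => rw [tmul_zero]; simp only [map_zero]
      | add u v hu hv => rw [tmul_add]; simp only [map_add, hu, hv]
      | tmul c₂ e =>
        induction e using TensorProduct.induction_on with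
        | zero => rw [tmul_zero, tmul_zero]; simp only [map_zero]
        | add u v hu hv => rw [tmul_add, tmul_add]; simp only [map_add, hu, hv]
        | tmul c₃ c₄ =>
          rw [LinearMap.mulLeft_apply, claim1, key2 hR.isUnit hR.hexagon2]
          simp [hφ]
  exact fun c => main c
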